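/- In the uniform price auction with unit demand (v_1 > 0 and v_k = 0 for k > 1), bidding truthfully b* = (v_1, 0, ..., 0) maximizes the pointwise utility against any fixed adversary bid vector β: for every non-increasing b ∈ [0,1]^K and non-increasing β ∈ [0,1]^K, u(b, β) ≤ u(b*, β). -/

import Mathlib

open scoped Classical

/-- Allocation in the K-item standard auction. -/
noncomputable def alloc (K : ℕ) (b β : ℕ → ℝ) : ℕ :=
  Nat.findGreatest (fun k => ∀ j, 1 ≤ j → j ≤ k → β (K + 1 - j) ≤ b j) K

/-- Uniform price: the (K+1)-th highest bid overall. -/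
noncomputable def price (K : ℕ) (b β : ℕ → ℝ) : ℝ :=
  max (b (alloc K b β + 1)) (β (K - alloc K b β + 1))

/-- Uniform-price utility. -/
noncomputable def util (K : ℕ) (v b β : ℕ → ℝ) : ℝ :=
  ∑ l ∈ Finset.Icc 1 (alloc K b β), (v l - price K b β)

lemma findGreatest_irrel (P : ℕ → Prop) (i1 i2 : DecidablePred P) (n : ℕ) :
    @Nat.findGreatest P i1 n = @Nat.findGreatest P i2 n := by
  congr 1

lemma alloc_le (K : ℕ) (b β : ℕ → ℝ) : alloc K b β ≤ K :=
  (findGreatest_irrel _ _ _ _).trans_le (Nat.findGreatest_le K)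

lemma le_alloc (K : ℕ) (b β : ℕ → ℝ) (m : ℕ) (hm : m ≤ K)
    (h : ∀ j, 1 ≤ j → j ≤ m → β (K + 1 - j) ≤ b j) : m ≤ alloc K b β :=
  (Nat.le_findGreatest hm h).trans_eq (findGreatest_irrel _ _ _ _)

lemma alloc_spec (K : ℕ) (b β : ℕ → ℝ) (h : alloc K b β ≠ 0) :
    ∀ j, 1 ≤ j → j ≤ alloc K b β → β (K + 1 - j) ≤ b j := by
  have he : alloc K b β
      = @Nat.findGreatest _ (fun a => Nat.decidableLoHiLe 1 a fun j => β (K + 1 - j) ≤ b j) K :=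
    findGreatest_irrel _ _ _ _
  rw [he] at h ⊢
  exact Nat.findGreatest_of_ne_zero rfl h

lemma util_formula (K : ℕ) (v b β : ℕ → ℝ) (hvunit : ∀ k, 2 ≤ k → v k = 0)
    (hA : 1 ≤ alloc K b β) :
    util K v b β = v 1 - (alloc K b β : ℝ) * price K b β := by
  have hsum : ∑ l ∈ Finset.Icc 1 (alloc K b β), v l = v 1 := by
    refine Finset.sum_eq_single_of_mem 1 (Finset.mem_Icc.mpr ⟨le_rfl, hA⟩) ?_
    intro l hl hne
    have hl2 : 2 ≤ l := by
      have := (Finset.mem_Icc.mp hl).1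
      omega
    exact hvunit l hl2
  rw [util, Finset.sum_sub_distrib, hsum, Finset.sum_const, Nat.card_Icc]
  simp [nsmul_eq_mul]

/-- Unit demand: truthful bidding `(v 1, 0, …, 0)` pointwise maximizes the
uniform-price utility against any fixed adversary bid vector. -/
theorem uniform_unit_demand_truthful (K : ℕ) (v b β : ℕ → ℝ)
    (hK : 1 ≤ K)
    (hv1 : 0 < v 1) (hv1le : v 1 ≤ 1)
    (hvunit : ∀ k, 2 ≤ k → v k = 0)
    (hb : ∀ i j, 1 ≤ i → i ≤ j → j ≤ K → b j ≤ b i)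
    (hb01 : ∀ i, 1 ≤ i → i ≤ K → b i ∈ Set.Icc (0:ℝ) 1)
    (hβ : ∀ i j, 1 ≤ i → i ≤ j → j ≤ K → β j ≤ β i)
    (hβ01 : ∀ i, 1 ≤ i → i ≤ K → β i ∈ Set.Icc (0:ℝ) 1)
    (hbK1 : b (K + 1) = 0) :
    util K v b β ≤ util K v (fun k => if k = 1 then v 1 else 0) β := by
  set b' : ℕ → ℝ := fun k => if k = 1 then v 1 else 0 with hb'def
  have hAle : alloc K b β ≤ K := alloc_le K b β
  have hA'le : alloc K b' β ≤ K := alloc_le K b' β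
  have hβK0 : 0 ≤ β K := (hβ01 K hK le_rfl).1
  have hub : alloc K b β = 0 → util K v b β = 0 := by
    intro h
    simp [util, h]
  have hub1 : 1 ≤ alloc K b β → util K v b β ≤ v 1 - β K := by
    intro hA1
    rw [util_formula K v b β hvunit hA1]
    have hβle : β K ≤ β (K - alloc K b β + 1) :=
      hβ (K - alloc K b β + 1) K (by omega) (by omega) le_rfl
    have hp : β K ≤ price K b β := le_trans hβle (le_max_right _ _)
    have hp0 : 0 ≤ price K b β := le_trans hβK0 hp
    have : β K ≤ (alloc K b β : ℝ) * price K b β := by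
      calc β K ≤ price K b β := hp
        _ = 1 * price K b β := (one_mul _).symm
        _ ≤ (alloc K b β : ℝ) * price K b β := by
            apply mul_le_mul_of_nonneg_right _ hp0
            exact_mod_cast hA1
    linarith
  by_cases hc : β K ≤ v 1
  · -- truthful wins at least one item
    have hA'1 : 1 ≤ alloc K b' β := by
      apply le_alloc K b' β 1 hK
      intro j hj1 hj2
      have : j = 1 := le_antisymm hj2 hj1
      subst this
      simpa [b'] using hc
    have hprice' : price K b' β = β (K - alloc K b' β + 1) := by
      have hb'A : b' (alloc K b' β + 1) = 0 := by
        have hne : alloc K b' β + 1 ≠ 1 := by omega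
        exact if_neg hne
      have hnn : (0:ℝ) ≤ β (K - alloc K b' β + 1) :=
        (hβ01 (K - alloc K b' β + 1) (by omega) (by omega)).1
      rw [price, hb'A, max_eq_right hnn]
    rw [util_formula K v b' β hvunit hA'1, hprice']
    rcases Nat.lt_or_ge (alloc K b' β) 2 with h2 | h2
    · -- alloc = 1, price' = β K
      have hA'eq : alloc K b' β = 1 := by omega
      have hterm : (alloc K b' β : ℝ) * β (K - alloc K b' β + 1) = β K := by
        rw [hA'eq]
        have hKA : K - 1 + 1 = K := by omega
        rw [hKA]
        norm_num
      rw [hterm]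
      rcases Nat.eq_zero_or_pos (alloc K b β) with h0 | h1
      · rw [hub h0]; linarith
      · exact hub1 h1
    · -- alloc ≥ 2, price' = 0
      have hspec := alloc_spec K b' β (by omega)
      have h0 : β (K - alloc K b' β + 1) = 0 := by
        have h1 : β (K + 1 - alloc K b' β) ≤ b' (alloc K b' β) :=
          hspec (alloc K b' β) (by omega) le_rfl
        have hb'A : b' (alloc K b' β) = 0 := by
          have hne : alloc K b' β ≠ 1 := by omega
          simp [b', hne]
        have heq : K - alloc K b' β + 1 = K + 1 - alloc K b' β := by omega
        have hnn : (0:ℝ) ≤ β (K + 1 - alloc K b' β) :=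
          (hβ01 (K + 1 - alloc K b' β) (by omega) (by omega)).1
        rw [heq]
        rw [hb'A] at h1
        linarith
      rw [h0, mul_zero, sub_zero]
      rcases Nat.eq_zero_or_pos (alloc K b β) with h0' | h1
      · rw [hub h0']; linarith
      · have := hub1 h1; linarith
  · -- β K > v 1 : truthful gets nothing, utility 0
    push_neg at hc
    have hA'0 : alloc K b' β = 0 := by
      by_contra h
      have hspec := alloc_spec K b' β h
      have h1 : β (K + 1 - 1) ≤ b' 1 := hspec 1 le_rfl (by omega)
      simp only [b', if_pos rfl] at h1
      simp only [Nat.add_sub_cancel] at h1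
      linarith
    have hu' : util K v b' β = 0 := by simp [util, hA'0]
    rw [hu']
    rcases Nat.eq_zero_or_pos (alloc K b β) with h0 | h1
    · rw [hub h0]
    · have := hub1 h1; linarith
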